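/- Let E be a directed graph, {p_v, s_e} a Cuntz–Krieger E-family in a C*-algebra B with B generated as a C*-algebra by {p_v} ∪ {s_e}, let c : E¹ → ℝ satisfy c(e) > k for all e for some constant k > 0, and suppose c(μ) ≠ 1 for every path μ of positive length. Fix β > 0. If φ₁ and φ₂ are states on B satisfying the algebraic (σᶜ, β)-KMS condition and φ₁(s_μ s_ν*) = φ₂(s_μ s_ν*) for all paths μ, ν with |μ| = |ν| and s(μ) = s(ν), then φ₁ = φ₂. -/

import Mathlib

open scoped ComplexOrder

/-- A directed graph: vertex set `V`, edge set `E`, range and source maps. -/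
structure DirectedGraph (V : Type*) (E : Type*) where
  r : E → V
  s : E → V

namespace DirectedGraph

variable {V E : Type*}

/-- A finite path `μ = μ₁…μₙ` in a directed graph, recorded as the list of its
edges (in order) together with its range vertex; a path of length `0` is a single
vertex.  We require `s (μᵢ) = r (μᵢ₊₁)` and that the range vertex is `r (μ₁)`
when the path is nonempty. -/
structure Path (G : DirectedGraph V E) where
  rng : V
  edges : List E
  chain : edges.Chain' fun a b => G.s a = G.r b
  head_compat : ∀ e ∈ edges.head?, G.r e = rng

/-- The source `s(μ)` of a path. -/
def Path.src {G : DirectedGraph V E} (μ : G.Path) : V :=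
  μ.edges.getLast?.elim μ.rng G.s

/-- The length `|μ|` of a path. -/
def Path.length {G : DirectedGraph V E} (μ : G.Path) : ℕ := μ.edges.length

/-- The length-`0` path at a vertex. -/
def Path.ofVertex (G : DirectedGraph V E) (v : V) : G.Path :=
  ⟨v, [], by first | exact List.IsChain.nil | constructor | simp [List.Chain'], by simp⟩

/-- `ρ.IsComp μ ν` says that `ρ` is the concatenation `μν` (so in particular
`s(μ) = r(ν)`). -/
def Path.IsComp {G : DirectedGraph V E} (ρ μ ν : G.Path) : Prop :=
  μ.src = ν.rng ∧ ρ.edges = μ.edges ++ ν.edges ∧ ρ.rng = μ.rng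

/-- A vertex is singular if it receives no edges or infinitely many edges. -/
def Singular (G : DirectedGraph V E) (v : V) : Prop :=
  {e | G.r e = v} = ∅ ∨ {e | G.r e = v}.Infinite

end DirectedGraph

/-- A Cuntz–Krieger `E`-family in a `*`-algebra `B`: mutually orthogonal
projections `P v` and partial isometries `S e` with mutually orthogonal ranges,
subject to the Cuntz–Krieger relations. -/
structure CKFamily {V E : Type*} (G : DirectedGraph V E) (B : Type*)
    [NonUnitalRing B] [StarRing B] [PartialOrder B] where
  P : V → B
  S : E → B
  P_sa : ∀ v, star (P v) = P v
  P_idem : ∀ v, P v * P v = P v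
  P_orth : ∀ v w, v ≠ w → P v * P w = 0
  S_partialIsometry : ∀ e, S e * star (S e) * S e = S e
  range_orth : ∀ e f, e ≠ f → S e * star (S e) * (S f * star (S f)) = 0
  ck1 : ∀ e, star (S e) * S e = P (G.s e)
  ck2 : ∀ e, S e * star (S e) ≤ P (G.r e)
  ck3 : ∀ v (h : {e | G.r e = v}.Finite), {e | G.r e = v}.Nonempty →
    P v = ∑ e ∈ h.toFinset, S e * star (S e)

namespace CKFamily

variable {V E B : Type*} {G : DirectedGraph V E}

section Algebraic

variable [NonUnitalRing B] [StarRing B] [PartialOrder B]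

/-- `s_μ = s_{μ₁} ⋯ s_{μₙ}` for a path `μ`, with `s_v = p_v` for a vertex. -/
def sP (F : CKFamily G B) (μ : G.Path) : B :=
  match μ.edges with
  | [] => F.P μ.rng
  | e :: es => es.foldl (fun b f => b * F.S f) (F.S e)

end Algebraic

section CStar

variable [NonUnitalNormedRing B] [StarRing B] [PartialOrder B]
  [NormedSpace ℂ B] [IsScalarTower ℂ B B] [SMulCommClass ℂ B B] [StarModule ℂ B]

/-- The submodule `F_k` = closed span of `{s_μ s_ν* : μ, ν ∈ Eᵏ, s(μ) = s(ν)}`. -/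
def FkSub (F : CKFamily G B) (k : ℕ) : Submodule ℂ B :=
  (Submodule.span ℂ {x : B | ∃ μ ν : G.Path, μ.length = k ∧ ν.length = k ∧
    μ.src = ν.src ∧ x = F.sP μ * star (F.sP ν)}).topologicalClosure

/-- The set `F_k`. -/
def Fk (F : CKFamily G B) (k : ℕ) : Set B := ↑(F.FkSub k)

/-- `ℰ_k` = closed span of `{s_μ s_ν* : μ, ν ∈ Eᵏ, s(μ) = s(ν) singular}`. -/
def Ek (F : CKFamily G B) (k : ℕ) : Set B :=
  ↑((Submodule.span ℂ {x : B | ∃ μ ν : G.Path, μ.length = k ∧ ν.length = k ∧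
    μ.src = ν.src ∧ G.Singular μ.src ∧
    x = F.sP μ * star (F.sP ν)}).topologicalClosure)

/-- `C_k = F_0 + ⋯ + F_k`. -/
def Ck (F : CKFamily G B) (k : ℕ) : Set B :=
  {x : B | ∃ f : Fin (k + 1) → B, (∀ i : Fin (k + 1), f i ∈ F.Fk i) ∧ x = ∑ i, f i}

/-- The submodule given by the closed span of
`{s_μ s_ν* : μ, ν ∈ E*, |μ| = |ν|, s(μ) = s(ν)}` (the "core"). -/
def coreSub (F : CKFamily G B) : Submodule ℂ B :=
  (Submodule.span ℂ {x : B | ∃ μ ν : G.Path, μ.length = ν.length ∧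
    μ.src = ν.src ∧ x = F.sP μ * star (F.sP ν)}).topologicalClosure

/-- A gauge action for a Cuntz–Krieger family: a point-norm continuous action of
the circle group by `*`-automorphisms fixing the `P v` and scaling the `S e`. -/
structure GaugeAction (F : CKFamily G B) where
  γ : Circle → B →L[ℂ] B
  map_one : γ 1 = ContinuousLinearMap.id ℂ B
  map_mul : ∀ z w, γ (z * w) = (γ z).comp (γ w)
  mul_hom : ∀ z (x y : B), γ z (x * y) = γ z x * γ z y
  star_hom : ∀ z (x : B), γ z (star x) = star (γ z x)
  cont : ∀ x : B, Continuous fun z => γ z x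
  gauge_P : ∀ z v, γ z (F.P v) = F.P v
  gauge_S : ∀ z e, γ z (F.S e) = (z : ℂ) • F.S e

/-- The fixed point algebra of a gauge action. -/
def GaugeAction.fixed {F : CKFamily G B} (γ : GaugeAction F) : Set B :=
  {a : B | ∀ z, γ.γ z a = a}

/-- `B` is generated, as a C*-algebra, by the family. -/
def Generates (F : CKFamily G B) : Prop :=
  closure (↑(NonUnitalStarAlgebra.adjoin ℂ
    (Set.range F.P ∪ Set.range F.S)) : Set B) = Set.univ

/-- The universality hypotheses: all vertex projections are nonzero, `B` is
generated by the family, and `B` carries a gauge action. -/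
def IsUniversal (F : CKFamily G B) : Prop :=
  (∀ v, F.P v ≠ 0) ∧ F.Generates ∧ Nonempty (GaugeAction F)

end CStar

end CKFamily

section States

variable {B : Type*} [NonUnitalNormedRing B] [StarRing B] [PartialOrder B]
  [NormedSpace ℂ B]

/-- A state: a positive continuous linear functional of norm one. -/
def IsStateOn (φ : B →L[ℂ] ℂ) : Prop :=
  ‖φ‖ = 1 ∧ ∀ x : B, 0 ≤ x → 0 ≤ φ x

end States

/-- `c(μ) = c(μ₁) ⋯ c(μₙ)`, with `c(v) = 1` for a vertex. -/
def cPath {V E : Type*} {G : DirectedGraph V E} (c : E → ℝ) (μ : G.Path) : ℝ :=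
  (μ.edges.map c).prod

/-- The algebraic `(σᶜ, β)`-KMS condition, checked on spanning elements. -/
def KMSCondition {V E B : Type*} {G : DirectedGraph V E}
    [NonUnitalNormedRing B] [StarRing B] [PartialOrder B] [NormedSpace ℂ B]
    (F : CKFamily G B) (c : E → ℝ) (β : ℝ) (φ : B →L[ℂ] ℂ) : Prop :=
  ∀ μ ν α η : G.Path, μ.src = ν.src → α.src = η.src →
    φ (F.sP μ * star (F.sP ν) * (F.sP α * star (F.sP η))) =
      Complex.ofReal (cPath c μ ^ (-β) * cPath c ν ^ β) *
        φ (F.sP α * star (F.sP η) * (F.sP μ * star (F.sP ν)))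

section Aux

open DirectedGraph CKFamily

variable {V E B : Type*} [NonUnitalNormedRing B]
    [StarRing B] [PartialOrder B] [NormedSpace ℂ B] [IsScalarTower ℂ B B]
    [SMulCommClass ℂ B B] [StarModule ℂ B] [CStarRing B] [CompleteSpace B]
    [StarOrderedRing B]
    {G : DirectedGraph V E} (F : CKFamily G B)

/-- If `q ≤ p` for projections, then `p` absorbs `q`. -/
lemma proj_absorb {p q : B} (hp : star p = p) (hq : star q = q) (hpp : p * p = p)
    (hqq : q * q = q) (hle : q ≤ p) : p * q = q := by
  have h1 : q ≤ q * p * q := by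
    have := star_left_conjugate_le_conjugate hle q
    rwa [hq, mul_assoc, ← mul_assoc q q q, hqq, hqq] at this
  set x := q - p * q with hx
  have hxx : star x * x = q - q * p * q := by
    have hq3 : q * p * (p * q) = q * p * q := by
      rw [← mul_assoc, mul_assoc q p p, hpp]
    rw [hx, star_sub, star_mul, hp, hq, sub_mul, mul_sub, mul_sub, hqq,
      ← mul_assoc, hq3]
    abel
  have h2 : star x * x ≤ 0 := by rw [hxx]; exact sub_nonpos.mpr h1
  have h3 : star x * x = 0 := le_antisymm h2 (star_mul_self_nonneg x)
  have h4 : x = 0 := by rwa [CStarRing.star_mul_self_eq_zero_iff] at h3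
  exact (sub_eq_zero.mp h4).symm

namespace CKFamily
set_option linter.unusedSectionVars false

/-- Word with explicit range vertex. -/
def sW (v : V) : List E → B
  | [] => F.P v
  | e :: es => es.foldl (fun b f => b * F.S f) (F.S e)

/-- Source of a word. -/
def srcOf (G : DirectedGraph V E) (v : V) (l : List E) : V :=
  l.getLast?.elim v G.s

lemma sP_eq_sW (μ : G.Path) : F.sP μ = sW F μ.rng μ.edges := by
  rcases μ with ⟨v, l, h1, h2⟩; cases l <;> rfl

lemma path_src_eq (μ : G.Path) : μ.src = srcOf G μ.rng μ.edges := rfl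

lemma srcOf_nil (v : V) : srcOf G v [] = v := rfl

lemma srcOf_ne_nil (v w : V) {l : List E} (h : l ≠ []) :
    srcOf G v l = srcOf G w l := by
  unfold srcOf
  rw [List.getLast?_eq_getLast h]
  rfl

lemma srcOf_cons (v : V) (e : E) (es : List E) :
    srcOf G v (e :: es) = srcOf G (G.s e) es := by
  cases es with
  | nil => rfl
  | cons f fs =>
    show ((e :: f :: fs).getLast?).elim v G.s = ((f :: fs).getLast?).elim (G.s e) G.s
    rw [List.getLast?_cons_cons, List.getLast?_eq_getLast (l := f :: fs) (by simp)]
    rfl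

lemma srcOf_append (v : V) (l m : List E) :
    srcOf G v (l ++ m) = srcOf G (srcOf G v l) m := by
  induction l generalizing v with
  | nil => rfl
  | cons e es ih => rw [List.cons_append, srcOf_cons, srcOf_cons, ih]

lemma sW_rng_irrel (v w : V) {l : List E} (h : l ≠ []) :
    sW F v l = sW F w l := by
  cases l with
  | nil => exact absurd rfl h
  | cons e es => rfl

lemma S_mul_P (e : E) : F.S e * F.P (G.s e) = F.S e := by
  rw [← F.ck1, ← mul_assoc, F.S_partialIsometry]

lemma SS_star_proj (e : E) :
    star (F.S e * star (F.S e)) = F.S e * star (F.S e) ∧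
    (F.S e * star (F.S e)) * (F.S e * star (F.S e)) = F.S e * star (F.S e) := by
  constructor
  · rw [star_mul, star_star]
  · rw [← mul_assoc, F.S_partialIsometry]

lemma P_mul_S (e : E) : F.P (G.r e) * F.S e = F.S e := by
  have h := proj_absorb (F.P_sa (G.r e)) (F.SS_star_proj e).1 (F.P_idem (G.r e))
    (F.SS_star_proj e).2 (F.ck2 e)
  calc F.P (G.r e) * F.S e = F.P (G.r e) * (F.S e * star (F.S e) * F.S e) := by
        rw [F.S_partialIsometry]
    _ = (F.P (G.r e) * (F.S e * star (F.S e))) * F.S e := by rw [← mul_assoc]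
    _ = F.S e * star (F.S e) * F.S e := by rw [h]
    _ = F.S e := F.S_partialIsometry e

lemma P_mul_S_ne (v : V) (e : E) (hv : v ≠ G.r e) : F.P v * F.S e = 0 := by
  calc F.P v * F.S e = F.P v * (F.P (G.r e) * F.S e) := by rw [F.P_mul_S]
    _ = (F.P v * F.P (G.r e)) * F.S e := by rw [mul_assoc]
    _ = 0 := by rw [F.P_orth v (G.r e) hv, zero_mul]

lemma star_S_mul_S_ne (e f : E) (h : e ≠ f) : star (F.S e) * F.S f = 0 := by
  have he : star (F.S e) = star (F.S e) * (F.S e * star (F.S e)) := by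
    conv_lhs => rw [← F.S_partialIsometry e]
    rw [star_mul, star_mul, star_star]
  have hf : F.S f = (F.S f * star (F.S f)) * F.S f := (F.S_partialIsometry f).symm
  rw [he, hf, mul_assoc, ← mul_assoc (F.S e * star (F.S e)),
    F.range_orth e f h, zero_mul, mul_zero]

lemma foldl_mul (x y : B) (l : List E) :
    l.foldl (fun b f => b * F.S f) (x * y) =
      x * l.foldl (fun b f => b * F.S f) y := by
  induction l generalizing y with
  | nil => rfl
  | cons f fs ih => simpa [mul_assoc] using ih (y * F.S f)

lemma sW_cons (v : V) (e : E) (es : List E) :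
    sW F v (e :: es) = F.S e * sW F (G.s e) es := by
  cases es with
  | nil => exact (F.S_mul_P e).symm
  | cons f fs => exact F.foldl_mul (F.S e) (F.S f) fs

lemma P_mul_sW (v : V) (l : List E) (h : ∀ e ∈ l.head?, G.r e = v) :
    F.P v * sW F v l = sW F v l := by
  cases l with
  | nil => exact F.P_idem v
  | cons e es =>
    have he : G.r e = v := h e rfl
    rw [sW_cons, ← mul_assoc, ← he, F.P_mul_S]

lemma P_mul_sW_ne_nil (v w : V) (e : E) (es : List E) (h : w ≠ G.r e) :
    F.P w * sW F v (e :: es) = 0 := by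
  rw [sW_cons, ← mul_assoc, F.P_mul_S_ne w e h, zero_mul]

lemma sW_mul_P_src (v : V) (l : List E) :
    sW F v l * F.P (srcOf G v l) = sW F v l := by
  induction l generalizing v with
  | nil => exact F.P_idem v
  | cons e es ih => rw [sW_cons, srcOf_cons, mul_assoc, ih]

lemma star_sW_mul_sW (v : V) (l : List E)
    (hc : l.Chain' fun a b => G.s a = G.r b) :
    star (sW F v l) * sW F v l = F.P (srcOf G v l) := by
  induction l generalizing v with
  | nil => rw [srcOf_nil]; show star (F.P v) * F.P v = F.P v; rw [F.P_sa, F.P_idem]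
  | cons e es ih =>
    obtain ⟨hh, ht⟩ := List.isChain_cons.mp hc
    have habs : F.P (G.s e) * sW F (G.s e) es = sW F (G.s e) es :=
      F.P_mul_sW (G.s e) es (fun f hf => (hh f hf).symm)
    rw [sW_cons, star_mul, mul_assoc, ← mul_assoc (star (F.S e)), F.ck1,
      ← mul_assoc, srcOf_cons]
    rw [mul_assoc _ (F.P (G.s e)) (sW F (G.s e) es), habs]
    exact ih (G.s e) ht

lemma sW_append (v : V) (l m : List E)
    (h : ∀ f ∈ m.head?, G.r f = srcOf G v l) :
    sW F v (l ++ m) = sW F v l * sW F (srcOf G v l) m := by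
  induction l generalizing v with
  | nil =>
    rw [List.nil_append, srcOf_nil]
    exact (F.P_mul_sW v m h).symm
  | cons e es ih =>
    rw [List.cons_append, sW_cons, sW_cons, srcOf_cons]
    rw [ih (G.s e) (by rwa [← srcOf_cons] ), mul_assoc]

lemma inner_trichotomy (v₁ v₂ : V) (l₁ l₂ : List E)
    (h₁ : l₁.Chain' fun a b => G.s a = G.r b)
    (h₂ : l₂.Chain' fun a b => G.s a = G.r b) :
    star (sW F v₁ l₁) * sW F v₂ l₂ = 0
    ∨ (∃ m, l₂ = l₁ ++ m ∧ (∀ f ∈ m.head?, G.r f = srcOf G v₁ l₁) ∧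
        srcOf G v₂ l₂ = srcOf G (srcOf G v₁ l₁) m ∧
        star (sW F v₁ l₁) * sW F v₂ l₂ = sW F (srcOf G v₁ l₁) m)
    ∨ (∃ m, l₁ = l₂ ++ m ∧ (∀ f ∈ m.head?, G.r f = srcOf G v₂ l₂) ∧
        srcOf G v₁ l₁ = srcOf G (srcOf G v₂ l₂) m ∧
        star (sW F v₁ l₁) * sW F v₂ l₂ = star (sW F (srcOf G v₂ l₂) m)) := by
  induction l₁ generalizing v₁ v₂ l₂ with
  | nil =>
    cases l₂ with
    | nil =>
      by_cases hv : v₁ = v₂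
      · subst hv
        refine Or.inr (Or.inl ⟨[], rfl, by simp, rfl, ?_⟩)
        show star (F.P v₁) * F.P v₁ = F.P v₁
        rw [F.P_sa, F.P_idem]
      · left
        show star (F.P v₁) * F.P v₂ = 0
        rw [F.P_sa, F.P_orth _ _ hv]
    | cons f fs =>
      by_cases hv : v₁ = G.r f
      · refine Or.inr (Or.inl ⟨f :: fs, rfl, ?_, srcOf_ne_nil _ _ (by simp), ?_⟩)
        · intro g hg
          simp only [List.head?_cons, Option.mem_def, Option.some.injEq] at hg
          rw [← hg, srcOf_nil, hv]
        · show star (F.P v₁) * sW F v₂ (f :: fs) = sW F (srcOf G v₁ []) (f :: fs)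
          rw [F.P_sa, srcOf_nil, sW_rng_irrel F v₂ v₁ (l := f :: fs) (by simp)]
          exact F.P_mul_sW v₁ (f :: fs) (fun g hg => by
            simp only [List.head?_cons, Option.mem_def, Option.some.injEq] at hg
            rw [← hg, hv])
      · left
        show star (F.P v₁) * sW F v₂ (f :: fs) = 0
        rw [F.P_sa]
        exact F.P_mul_sW_ne_nil v₂ v₁ f fs hv
  | cons e es ih =>
    cases l₂ with
    | nil =>
      by_cases hv : v₂ = G.r e
      · refine Or.inr (Or.inr ⟨e :: es, rfl, ?_, srcOf_ne_nil _ _ (by simp), ?_⟩)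
        · intro g hg
          simp only [List.head?_cons, Option.mem_def, Option.some.injEq] at hg
          rw [← hg, srcOf_nil, hv]
        · show star (sW F v₁ (e :: es)) * F.P v₂ = star (sW F (srcOf G v₂ []) (e :: es))
          rw [srcOf_nil]
          have habs : F.P v₂ * sW F v₂ (e :: es) = sW F v₂ (e :: es) :=
            F.P_mul_sW v₂ _ (fun g hg => by
              simp only [List.head?_cons, Option.mem_def, Option.some.injEq] at hg
              rw [← hg, hv])
          calc star (sW F v₁ (e :: es)) * F.P v₂
              = star (F.P v₂ * sW F v₁ (e :: es)) := by rw [star_mul, F.P_sa]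
            _ = star (sW F v₂ (e :: es)) := by
                rw [sW_rng_irrel F v₁ v₂ (l := e :: es) (by simp), habs]
      · left
        have h0 : F.P v₂ * sW F v₁ (e :: es) = 0 := F.P_mul_sW_ne_nil v₁ v₂ e es hv
        calc star (sW F v₁ (e :: es)) * F.P v₂
            = star (F.P v₂ * sW F v₁ (e :: es)) := by rw [star_mul, F.P_sa]
          _ = 0 := by rw [h0, star_zero]
    | cons f fs =>
      obtain ⟨hh₁, ht₁⟩ := List.isChain_cons.mp h₁
      obtain ⟨hh₂, ht₂⟩ := List.isChain_cons.mp h₂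
      by_cases hef : e = f
      · subst hef
        have key : star (sW F v₁ (e :: es)) * sW F v₂ (e :: fs)
            = star (sW F (G.s e) es) * sW F (G.s e) fs := by
          rw [sW_cons, sW_cons, star_mul, mul_assoc, ← mul_assoc (star (F.S e)),
            F.ck1, F.P_mul_sW (G.s e) fs (fun g hg => (hh₂ g hg).symm)]
        rw [key, srcOf_cons, srcOf_cons]
        rcases ih (G.s e) (G.s e) fs ht₁ ht₂ with
          h0 | ⟨m, hm, hhead, hsrc, heq⟩ | ⟨m, hm, hhead, hsrc, heq⟩
        · exact Or.inl h0
        · exact Or.inr (Or.inl ⟨m, by rw [List.cons_append, hm], hhead, hsrc, heq⟩)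
        · exact Or.inr (Or.inr ⟨m, by rw [List.cons_append, hm], hhead, hsrc, heq⟩)
      · left
        rw [sW_cons, sW_cons, star_mul, mul_assoc, ← mul_assoc (star (F.S e)),
          F.star_S_mul_S_ne e f hef, zero_mul, mul_zero]

lemma srcOf_eq_of_getLast {l : List E} {a : E} (ha : l.getLast? = some a) (v : V) :
    srcOf G v l = G.s a := by
  unfold srcOf; rw [ha]; rfl

/-- The set of "words" `s_μ s_ν*` together with `0`. -/
def Wset (F : CKFamily G B) : Set B :=
  {x | x = 0 ∨ ∃ μ ν : G.Path, μ.src = ν.src ∧ x = F.sP μ * star (F.sP ν)}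

lemma zero_mem_Wset : (0 : B) ∈ Wset F := Or.inl rfl

lemma Wset_star {x : B} (hx : x ∈ Wset F) : star x ∈ Wset F := by
  rcases hx with rfl | ⟨μ, ν, hsrc, rfl⟩
  · exact Or.inl (star_zero B)
  · exact Or.inr ⟨ν, μ, hsrc.symm, by rw [star_mul, star_star]⟩

lemma P_mem_Wset (v : V) : F.P v ∈ Wset F := by
  refine Or.inr ⟨DirectedGraph.Path.ofVertex G v, DirectedGraph.Path.ofVertex G v, rfl, ?_⟩
  show F.P v = F.P v * star (F.P v)
  rw [F.P_sa, F.P_idem]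

lemma S_mem_Wset (e : E) : F.S e ∈ Wset F := by
  refine Or.inr ⟨⟨G.r e, [e], List.isChain_singleton e, by simp⟩,
    DirectedGraph.Path.ofVertex G (G.s e), ?_, ?_⟩
  · rfl
  · show F.S e = sW F (G.r e) [e] * star (F.P (G.s e))
    rw [F.P_sa]
    exact (F.S_mul_P e).symm

lemma Wset_mul {x y : B} (hx : x ∈ Wset F) (hy : y ∈ Wset F) :
    x * y ∈ Wset F := by
  rcases hx with rfl | ⟨μ, ν, hsrc1, rfl⟩
  · rw [zero_mul]; exact F.zero_mem_Wset
  rcases hy with rfl | ⟨α, η, hsrc2, rfl⟩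
  · rw [mul_zero]; exact F.zero_mem_Wset
  have hassoc : ∀ a b c d : B, a * b * (c * d) = a * (b * c) * d := by
    intros a b c d; rw [mul_assoc, ← mul_assoc b c d, ← mul_assoc]
  rw [hassoc, F.sP_eq_sW μ, F.sP_eq_sW ν, F.sP_eq_sW α, F.sP_eq_sW η]
  rcases F.inner_trichotomy ν.rng α.rng ν.edges α.edges ν.chain α.chain with
    h0 | ⟨m, hm, hhead, hsrcc, heq⟩ | ⟨m, hm, hhead, hsrcc, heq⟩
  · rw [h0, mul_zero, zero_mul]; exact F.zero_mem_Wset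
  · -- α = ν ++ m  :  result s_{μ ++ m} s_η*
    have hms : srcOf G ν.rng ν.edges = srcOf G μ.rng μ.edges := by
      rw [← path_src_eq, ← path_src_eq, hsrc1]
    have hhead' : ∀ f ∈ m.head?, G.r f = srcOf G μ.rng μ.edges := fun f hf =>
      (hhead f hf).trans hms
    have hchm : m.Chain' fun a b => G.s a = G.r b := by
      have := hm ▸ α.chain
      exact (List.isChain_append.mp this).2.1
    have hlink : ∀ a ∈ μ.edges.getLast?, ∀ b ∈ m.head?, G.s a = G.r b := by
      intro a ha b hb
      rw [hhead' b hb, srcOf_eq_of_getLast ha]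
    refine Or.inr ⟨⟨μ.rng, μ.edges ++ m, List.isChain_append.mpr ⟨μ.chain, hchm, hlink⟩, ?_⟩,
      η, ?_, ?_⟩
    · -- head_compat
      intro g hg
      cases hμe : μ.edges with
      | nil =>
        rw [hμe] at hg
        rw [hhead' g hg, hμe, srcOf_nil]
      | cons a as =>
        rw [hμe, List.cons_append, List.head?_cons, Option.mem_def,
          Option.some.injEq] at hg
        exact hg ▸ μ.head_compat a (by rw [hμe]; rfl)
    · -- sources agree
      show srcOf G μ.rng (μ.edges ++ m) = η.src
      rw [srcOf_append, ← hms, ← hsrcc, ← path_src_eq, hsrc2]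
    · -- the element
      show sW F μ.rng μ.edges * (star (sW F ν.rng ν.edges) * sW F α.rng α.edges) *
          star (sW F η.rng η.edges) =
        sW F μ.rng (μ.edges ++ m) * star (sW F η.rng η.edges)
      rw [heq, hms, F.sW_append μ.rng μ.edges m hhead']
  · -- ν = α ++ m  :  result s_μ s_{η ++ m}*
    have hms : srcOf G α.rng α.edges = srcOf G η.rng η.edges := by
      rw [← path_src_eq, ← path_src_eq, hsrc2]
    have hhead' : ∀ f ∈ m.head?, G.r f = srcOf G η.rng η.edges := fun f hf =>
      (hhead f hf).trans hms
    have hchm : m.Chain' fun a b => G.s a = G.r b := by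
      have := hm ▸ ν.chain
      exact (List.isChain_append.mp this).2.1
    have hlink : ∀ a ∈ η.edges.getLast?, ∀ b ∈ m.head?, G.s a = G.r b := by
      intro a ha b hb
      rw [hhead' b hb, srcOf_eq_of_getLast ha]
    refine Or.inr ⟨μ,
      ⟨η.rng, η.edges ++ m, List.isChain_append.mpr ⟨η.chain, hchm, hlink⟩, ?_⟩, ?_, ?_⟩
    · intro g hg
      cases hηe : η.edges with
      | nil =>
        rw [hηe] at hg
        rw [hhead' g hg, hηe, srcOf_nil]
      | cons a as =>
        rw [hηe, List.cons_append, List.head?_cons, Option.mem_def,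
          Option.some.injEq] at hg
        exact hg ▸ η.head_compat a (by rw [hηe]; rfl)
    · show μ.src = srcOf G η.rng (η.edges ++ m)
      rw [srcOf_append, ← hms, ← hsrcc, ← path_src_eq, hsrc1]
    · show sW F μ.rng μ.edges * (star (sW F ν.rng ν.edges) * sW F α.rng α.edges) *
          star (sW F η.rng η.edges) =
        sW F μ.rng μ.edges * star (sW F η.rng (η.edges ++ m))
      rw [heq, hms, F.sW_append η.rng η.edges m hhead', star_mul, mul_assoc]

lemma rpow_ne_one_aux {x t : ℝ} (hx : 0 < x) (hx1 : x ≠ 1) (ht : t ≠ 0) :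
    x ^ t ≠ 1 := by
  intro h
  apply hx1
  have : (x ^ t) ^ t⁻¹ = x := by
    rw [← Real.rpow_mul hx.le, mul_inv_cancel₀ ht, Real.rpow_one]
  rw [h, Real.one_rpow] at this
  exact this.symm

lemma eq_scalar_self_zero {z : ℂ} {s : ℝ} (hs : s ≠ 1) (h : z = (s : ℂ) * z) :
    z = 0 := by
  have h1 : ((s : ℂ) - 1) * z = 0 := by rw [sub_mul, one_mul, ← h, sub_self]
  rcases mul_eq_zero.mp h1 with h2 | h2
  · exact absurd (Complex.ofReal_eq_one.mp (sub_eq_zero.mp h2)) hs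
  · exact h2

lemma phi_vanish (c : E → ℝ) (hcpos : ∀ e, 0 < c e)
    (hc1 : ∀ μ : G.Path, 0 < μ.length → cPath c μ ≠ 1)
    (β : ℝ) (hβ : 0 < β) (φ : B →L[ℂ] ℂ) (hφ : KMSCondition F c β φ)
    (μ ν : G.Path) (hsrc : μ.src = ν.src) (hlen : μ.length ≠ ν.length) :
    φ (F.sP μ * star (F.sP ν)) = 0 := by
  have hassoc : ∀ a b c d : B, a * b * (c * d) = a * (b * c) * d := by
    intros a b c d; rw [mul_assoc, ← mul_assoc b c d, ← mul_assoc]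
  set a := F.sP μ with ha
  set b := F.sP ν with hb
  have haw : a = sW F μ.rng μ.edges := F.sP_eq_sW μ
  have hbw : b = sW F ν.rng ν.edges := F.sP_eq_sW ν
  have hms : srcOf G ν.rng ν.edges = srcOf G μ.rng μ.edges := by
    rw [← path_src_eq, ← path_src_eq, hsrc]
  have hx1 : a * star b * (b * star b) = a * star b := by
    rw [hassoc, hbw, F.star_sW_mul_sW ν.rng ν.edges ν.chain, hms, haw,
      F.sW_mul_P_src]
  have hx2 : a * star a * (a * star b) = a * star b := by
    rw [hassoc, haw, F.star_sW_mul_sW μ.rng μ.edges μ.chain,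
      F.sW_mul_P_src]
  have hμpos : 0 < cPath c μ :=
    List.prod_pos (by rintro x hx; rw [List.mem_map] at hx
                      obtain ⟨f, _, rfl⟩ := hx; exact hcpos f)
  have hνpos : 0 < cPath c ν :=
    List.prod_pos (by rintro x hx; rw [List.mem_map] at hx
                      obtain ⟨f, _, rfl⟩ := hx; exact hcpos f)
  rcases F.inner_trichotomy ν.rng μ.rng ν.edges μ.edges ν.chain μ.chain with
    h0 | ⟨m, hm, hhead, hsrcc, heq⟩ | ⟨m, hm, hhead, hsrcc, heq⟩
  · -- star b * a = 0
    have h := hφ μ ν ν ν hsrc rfl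
    rw [← ha, ← hb, hx1] at h
    have e2 : b * star b * (a * star b) = 0 := by
      rw [hassoc, haw, hbw, h0, mul_zero, zero_mul]
    rw [e2, map_zero, mul_zero] at h
    exact h
  · -- μ.edges = ν.edges ++ m
    have hmne : m ≠ [] := by
      intro hnil
      apply hlen
      show μ.edges.length = ν.edges.length
      rw [hm, hnil, List.append_nil]
    have h := hφ μ ν ν ν hsrc rfl
    rw [← ha, ← hb, hx1] at h
    have e2 : b * star b * (a * star b) = a * star b := by
      rw [hassoc, haw, hbw, heq,
        ← F.sW_append ν.rng ν.edges m hhead, ← hm,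
        sW_rng_irrel F ν.rng μ.rng (l := μ.edges)
          (by rw [hm]; exact List.append_ne_nil_of_right_ne_nil _ hmne)]
    rw [e2] at h
    -- the scalar
    obtain ⟨f, fs, rfl⟩ : ∃ f fs, m = f :: fs := by
      cases m with
      | nil => exact absurd rfl hmne
      | cons f fs => exact ⟨f, fs, rfl⟩
    have hchm : (f :: fs).Chain' fun a b => G.s a = G.r b := by
      have := hm ▸ μ.chain
      exact (List.isChain_append.mp this).2.1
    set m' : G.Path := ⟨G.r f, f :: fs, hchm, by
      intro g hg
      simp only [List.head?_cons, Option.mem_def, Option.some.injEq] at hg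
      rw [hg]⟩ with hm'
    have hmp_pos : 0 < cPath c m' :=
      List.prod_pos (by rintro x hx; rw [List.mem_map] at hx
                        obtain ⟨g, _, rfl⟩ := hx; exact hcpos g)
    have hmp_ne : cPath c m' ≠ 1 := hc1 m' (by show 0 < (f :: fs).length; simp)
    have hfact : cPath c μ = cPath c ν * cPath c m' := by
      show (μ.edges.map c).prod = _
      rw [hm, List.map_append, List.prod_append]; rfl
    have hscal : cPath c μ ^ (-β) * cPath c ν ^ β = cPath c m' ^ (-β) := by
      rw [hfact, Real.mul_rpow hνpos.le hmp_pos.le,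
        mul_comm (cPath c ν ^ (-β)) (cPath c m' ^ (-β)), mul_assoc,
        ← Real.rpow_add hνpos, neg_add_cancel, Real.rpow_zero, mul_one]
    rw [hscal] at h
    exact eq_scalar_self_zero
      (rpow_ne_one_aux hmp_pos hmp_ne (neg_ne_zero.mpr hβ.ne')) h
  · -- ν.edges = μ.edges ++ m
    have hmne : m ≠ [] := by
      intro hnil
      apply hlen
      show μ.edges.length = ν.edges.length
      rw [hm, hnil, List.append_nil]
    have h := hφ μ ν μ μ hsrc rfl
    rw [← ha, ← hb, hx2] at h
    have e1 : a * star b * (a * star a) = a * star b := by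
      rw [hassoc, haw, hbw, heq, mul_assoc, ← star_mul,
        ← F.sW_append μ.rng μ.edges m hhead, ← hm,
        sW_rng_irrel F μ.rng ν.rng (l := ν.edges)
          (by rw [hm]; exact List.append_ne_nil_of_right_ne_nil _ hmne)]
    rw [e1] at h
    obtain ⟨f, fs, rfl⟩ : ∃ f fs, m = f :: fs := by
      cases m with
      | nil => exact absurd rfl hmne
      | cons f fs => exact ⟨f, fs, rfl⟩
    have hchm : (f :: fs).Chain' fun a b => G.s a = G.r b := by
      have := hm ▸ ν.chain
      exact (List.isChain_append.mp this).2.1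
    set m' : G.Path := ⟨G.r f, f :: fs, hchm, by
      intro g hg
      simp only [List.head?_cons, Option.mem_def, Option.some.injEq] at hg
      rw [hg]⟩ with hm'
    have hmp_pos : 0 < cPath c m' :=
      List.prod_pos (by rintro x hx; rw [List.mem_map] at hx
                        obtain ⟨g, _, rfl⟩ := hx; exact hcpos g)
    have hmp_ne : cPath c m' ≠ 1 := hc1 m' (by show 0 < (f :: fs).length; simp)
    have hfact : cPath c ν = cPath c μ * cPath c m' := by
      show (ν.edges.map c).prod = _
      rw [hm, List.map_append, List.prod_append]; rfl
    have hscal : cPath c μ ^ (-β) * cPath c ν ^ β = cPath c m' ^ β := by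
      rw [hfact, Real.mul_rpow hμpos.le hmp_pos.le, ← mul_assoc,
        ← Real.rpow_add hμpos, neg_add_cancel, Real.rpow_zero, one_mul]
    rw [hscal] at h
    exact eq_scalar_self_zero (rpow_ne_one_aux hmp_pos hmp_ne hβ.ne') h

end CKFamily
end Aux

/-- two `(σᶜ, β)`-KMS states that agree on the elements
`s_μ s_ν*` with `|μ| = |ν|`, `s(μ) = s(ν)` are equal. -/
theorem KMS_state_determined_by_core {V E B : Type*} [NonUnitalNormedRing B]
    [StarRing B] [PartialOrder B] [NormedSpace ℂ B] [IsScalarTower ℂ B B]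
    [SMulCommClass ℂ B B] [StarModule ℂ B] [CStarRing B] [CompleteSpace B]
    [StarOrderedRing B]
    (G : DirectedGraph V E) (F : CKFamily G B) (hgen : F.Generates)
    (c : E → ℝ) (k₀ : ℝ) (hk₀ : 0 < k₀) (hc : ∀ e, k₀ < c e)
    (hc1 : ∀ μ : G.Path, 0 < μ.length → cPath c μ ≠ 1)
    (β : ℝ) (hβ : 0 < β) (φ₁ φ₂ : B →L[ℂ] ℂ)
    (h₁ : IsStateOn φ₁) (h₂ : IsStateOn φ₂)
    (hKMS₁ : KMSCondition F c β φ₁) (hKMS₂ : KMSCondition F c β φ₂)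
    (hagree : ∀ μ ν : G.Path, μ.length = ν.length → μ.src = ν.src →
      φ₁ (F.sP μ * star (F.sP ν)) = φ₂ (F.sP μ * star (F.sP ν))) :
    φ₁ = φ₂ := by
  have hcpos : ∀ e, 0 < c e := fun e => hk₀.trans (hc e)
  have key : ∀ x ∈ F.Wset, φ₁ x = φ₂ x := by
    rintro x (rfl | ⟨μ, ν, hsrc, rfl⟩)
    · simp
    · by_cases hl : μ.length = ν.length
      · exact hagree μ ν hl hsrc
      · rw [F.phi_vanish c hcpos hc1 β hβ φ₁ hKMS₁ μ ν hsrc hl,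
          F.phi_vanish c hcpos hc1 β hβ φ₂ hKMS₂ μ ν hsrc hl]
  set Msub := Submodule.span ℂ F.Wset with hM
  have hmulW : ∀ w ∈ F.Wset, ∀ y ∈ Msub, w * y ∈ Msub := by
    intro w hw y hy
    induction hy using Submodule.span_induction with
    | mem z hz => exact Submodule.subset_span (F.Wset_mul hw hz)
    | zero => rw [mul_zero]; exact Submodule.zero_mem _
    | add u v hu hv hu' hv' => rw [mul_add]; exact Submodule.add_mem _ hu' hv'
    | smul a u hu hu' => rw [mul_smul_comm]; exact Submodule.smul_mem _ _ hu'
  have hmulM : ∀ x y : B, x ∈ Msub → y ∈ Msub → x * y ∈ Msub := by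
    intro x y hx hy
    induction hx using Submodule.span_induction with
    | mem z hz => exact hmulW z hz y hy
    | zero => rw [zero_mul]; exact Submodule.zero_mem _
    | add u v hu hv hu' hv' => rw [add_mul]; exact Submodule.add_mem _ hu' hv'
    | smul a u hu hu' => rw [smul_mul_assoc]; exact Submodule.smul_mem _ _ hu'
  have hstarM : ∀ x : B, x ∈ Msub → star x ∈ Msub := by
    intro x hx
    induction hx using Submodule.span_induction with
    | mem z hz => exact Submodule.subset_span (F.Wset_star hz)
    | zero => rw [star_zero]; exact Submodule.zero_mem _
    | add u v hu hv hu' hv' => rw [star_add]; exact Submodule.add_mem _ hu' hv'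
    | smul a u hu hu' => rw [star_smul]; exact Submodule.smul_mem _ _ hu'
  let A : NonUnitalStarSubalgebra ℂ B :=
    { toNonUnitalSubalgebra := Msub.toNonUnitalSubalgebra hmulM
      star_mem' := fun {a} ha => hstarM a ha }
  have hadj : NonUnitalStarAlgebra.adjoin ℂ (Set.range F.P ∪ Set.range F.S) ≤ A := by
    apply NonUnitalStarAlgebra.adjoin_le
    rintro x (⟨v, rfl⟩ | ⟨e, rfl⟩)
    · exact Submodule.subset_span (F.P_mem_Wset v)
    · exact Submodule.subset_span (F.S_mem_Wset e)
  have hspan : ∀ x ∈ Msub, φ₁ x = φ₂ x := by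
    intro x hx
    induction hx using Submodule.span_induction with
    | mem z hz => exact key z hz
    | zero => simp
    | add u v hu hv hu' hv' => rw [map_add, map_add, hu', hv']
    | smul a u hu hu' => rw [map_smul, map_smul, hu']
  have heqOn : Set.EqOn (⇑φ₁) (⇑φ₂)
      (↑(NonUnitalStarAlgebra.adjoin ℂ (Set.range F.P ∪ Set.range F.S)) : Set B) :=
    fun x hx => hspan x (hadj hx)
  have hclos := heqOn.closure φ₁.continuous φ₂.continuous
  ext x
  exact hclos (by rw [hgen]; trivial)
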